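/- Let ψ : ℝⁿ → ℝ ∪ {+∞} be a lower semicontinuous convex function such that ∫ e^{−ψ} dx > 0. Then the following are equivalent: (i) ∫ e^{−ψ} dx < +∞; (ii) there exist a > 0 and b ∈ ℝ such that ψ(x) ≥ a|x| + b for all x ∈ ℝⁿ; (iii) the point 0 belongs to the interior of dom(ψ*), where ψ*(y) = sup_{x∈ℝⁿ} {x·y − ψ(x)} and dom(ψ*) = {y : ψ*(y) < +∞}. -/

import Mathlib

open MeasureTheory Real Filter Set
attribute [local instance] Classical.propDecidable
open scoped ENNReal NNReal Topology

noncomputable section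

/-- `ℝⁿ` as a Euclidean space. -/
abbrev En (n : ℕ) : Type := EuclideanSpace ℝ (Fin n)

/-- `exp(-t)` for an extended real `t`, valued in `ℝ≥0∞`. -/
def expNeg (t : EReal) : ℝ≥0∞ :=
  if t = ⊥ then ⊤ else if t = ⊤ then 0 else ENNReal.ofReal (Real.exp (-t.toReal))

/-- Convexity for `EReal`-valued functions on `ℝⁿ`. -/
def ConvexE {n : ℕ} (f : En n → EReal) : Prop :=
  ∀ x y : En n, ∀ t : ℝ, 0 ≤ t → t ≤ 1 →
    f (t • x + (1 - t) • y) ≤ (t : EReal) * f x + ((1 - t : ℝ) : EReal) * f y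

/-- The class `F(ℝⁿ)`: proper lower semicontinuous convex functions `ℝⁿ → ℝ ∪ {+∞}`. -/
def IsF {n : ℕ} (f : En n → EReal) : Prop :=
  LowerSemicontinuous f ∧ ConvexE f ∧ (∃ x, f x ≠ ⊤) ∧ (∀ x, f x ≠ ⊥)

/-- Fenchel–Legendre transform. -/
def legendre {n : ℕ} (f : En n → EReal) : En n → EReal :=
  fun y => ⨆ x : En n, ((inner ℝ x y : ℝ) : EReal) - f x

/-- `∫ e^{-f} dm`, valued in `ℝ≥0∞`. -/
def intExpNeg {n : ℕ} (m : Measure (En n)) (f : En n → EReal) : ℝ≥0∞ :=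
  ∫⁻ x, expNeg (f x) ∂m

/-- Extended-real logarithm of an `ℝ≥0∞` number. -/
def elog (x : ℝ≥0∞) : EReal :=
  if x = 0 then ⊥ else if x = ⊤ then ⊤ else ((Real.log x.toReal : ℝ) : EReal)

/-- Positive part of an extended real, as an element of `ℝ≥0∞`. -/
def posPart (x : EReal) : ℝ≥0∞ := if x = ⊤ then ⊤ else ENNReal.ofReal x.toReal

/-- Extended-valued integral `∫ f dμ := ∫ f⁺ dμ - ∫ f⁻ dμ`. -/
def eInt {n : ℕ} (μ : Measure (En n)) (f : En n → EReal) : EReal :=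
  ((∫⁻ x, posPart (f x) ∂μ : ℝ≥0∞) : EReal) - ((∫⁻ x, posPart (-f x) ∂μ : ℝ≥0∞) : EReal)

/-- Probability measures with finite first moment. -/
def MemP1 {n : ℕ} (ν : Measure (En n)) : Prop :=
  IsProbabilityMeasure ν ∧ ∫⁻ x, (‖x‖₊ : ℝ≥0∞) ∂ν ≠ ⊤

/-- Probability measures with finite second moment. -/
def MemP2 {n : ℕ} (ν : Measure (En n)) : Prop :=
  IsProbabilityMeasure ν ∧ ∫⁻ x, (‖x‖₊ : ℝ≥0∞) ^ 2 ∂ν ≠ ⊤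

/-- A measure is compactly supported. -/
def HasCompactSupportMeasure {n : ℕ} (ν : Measure (En n)) : Prop :=
  ∃ K : Set (En n), IsCompact K ∧ ν Kᶜ = 0

/-- Coordinate sign flip of a point of `ℝⁿ`. -/
def signFlip {n : ℕ} (ε : Fin n → Bool) (x : En n) : En n :=
  (EuclideanSpace.equiv (Fin n) ℝ).symm (fun i => if ε i then x i else -x i)

/-- Unconditional function. -/
def UncondFun {n : ℕ} (f : En n → EReal) : Prop := ∀ ε x, f (signFlip ε x) = f x

/-- Symmetric function. -/
def SymmFun {n : ℕ} (f : En n → EReal) : Prop := ∀ x, f (-x) = f x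

/-- Unconditional measure. -/
def UncondMeas {n : ℕ} (ν : Measure (En n)) : Prop := ∀ ε, Measure.map (signFlip ε) ν = ν

/-- Symmetric measure. -/
def SymmMeas {n : ℕ} (ν : Measure (En n)) : Prop := Measure.map (fun x => -x) ν = ν

/-- The functional `K(ν|m) = sup { ∫(-f) dν + log ∫ e^{-f*} dm : f ∈ L¹(ν) ∩ F(ℝⁿ) }`. -/
def Kfun {n : ℕ} (ν m : Measure (En n)) : EReal :=
  ⨆ (f : En n → EReal) (_ : IsF f ∧ (∀ᵐ x ∂ν, f x ≠ ⊤) ∧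
      Integrable (fun x => (f x).toReal) ν),
    ((-(∫ x, (f x).toReal ∂ν) : ℝ) : EReal) + elog (intExpNeg m (legendre f))

/-- Maximal correlation transport cost `T(ν₁, ν₂)`. -/
def Tcost {n : ℕ} (ν₁ ν₂ : Measure (En n)) : EReal :=
  ⨅ (f : En n → EReal) (_ : IsF f), eInt ν₁ f + eInt ν₂ (legendre f)

/-- Relative entropy `H(η|m)`, equal to `+∞` when `η` is not absolutely continuous w.r.t. `m`. -/
def relEnt {n : ℕ} (η m : Measure (En n)) : EReal :=
  if η ≪ m then eInt η (fun x => ((Real.log (η.rnDeriv m x).toReal : ℝ) : EReal)) else ⊤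

/-- The standard Gaussian measure on `ℝⁿ`. -/
def stdGaussian (n : ℕ) : Measure (En n) :=
  volume.withDensity fun x =>
    ENNReal.ofReal ((2 * Real.pi) ^ (-(n : ℝ) / 2) * Real.exp (-‖x‖ ^ 2 / 2))

/-- Squared `2`-Wasserstein distance. -/
def W2sq {n : ℕ} (μ ν : Measure (En n)) : ℝ≥0∞ :=
  ⨅ (p : Measure (En n × En n)) (_ : p.map Prod.fst = μ ∧ p.map Prod.snd = ν),
    ∫⁻ q, (‖q.1 - q.2‖₊ : ℝ≥0∞) ^ 2 ∂p

/-- Absolute continuity of `g : ℝ → ℝ` on `[a, b]` (FTC characterization). -/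
def ACOn (g : ℝ → ℝ) (a b : ℝ) : Prop :=
  IntegrableOn (deriv g) (Set.Icc a b) ∧
    ∀ x ∈ Set.Icc a b, g x - g a = ∫ t in a..x, deriv g t

/-- The point of `ℝⁿ` obtained by replacing the `i`-th coordinate of `x` by `t`. -/
def updCoord {n : ℕ} (x : En n) (i : Fin n) (t : ℝ) : En n :=
  (EuclideanSpace.equiv (Fin n) ℝ).symm
    (Function.update ((EuclideanSpace.equiv (Fin n) ℝ) x) i t)

/-- Absolute continuity on almost every line parallel to a coordinate axis. -/
def ACL {n : ℕ} (g : En n → ℝ) : Prop :=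
  ∀ i : Fin n, ∀ᵐ x ∂(volume : Measure (En n)),
    ∀ a b : ℝ, ACOn (fun t => g (updCoord x i t)) a b

/-- Squared norm of the coordinate-wise a.e. gradient, via line derivatives. -/
def gradSq {n : ℕ} (g : En n → ℝ) (x : En n) : ℝ :=
  ∑ i : Fin n, (lineDeriv ℝ g x (EuclideanSpace.single i 1)) ^ 2

/-- Relative Fisher information `I(η|γ) = 4 ∫ |∇ √h|² dγ` where `h = dη/dγ`;
`+∞` unless `√h` is absolutely continuous on almost every line parallel to an axis. -/
def fisherInfo {n : ℕ} (η γ : Measure (En n)) : ℝ≥0∞ :=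
  if η ≪ γ ∧ ACL (fun x => Real.sqrt (η.rnDeriv γ x).toReal) then
    4 * ∫⁻ x, ENNReal.ofReal (gradSq (fun y => Real.sqrt (η.rnDeriv γ y).toReal) x) ∂γ
  else ⊤

/-- Deficit in the Gaussian logarithmic Sobolev inequality. -/
def lsDeficit {n : ℕ} (η : Measure (En n)) : EReal :=
  ((1 / 2 : ℝ) : EReal) * ((fisherInfo η (stdGaussian n) : ℝ≥0∞) : EReal)
    - relEnt η (stdGaussian n)

/-- Moment measure `∇V_# η` of a log-concave measure `η = e^{-V} dx`. -/
def momentMeasure {n : ℕ} (V : En n → EReal) (η : Measure (En n)) : Measure (En n) :=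
  Measure.map (fun x => gradient (fun y => (V y).toReal) x) η

/-- Essential continuity of a convex function. -/
def EssCont {n : ℕ} (V : En n → EReal) : Prop :=
  μH[(n : ℝ) - 1] {x : En n | x ∈ frontier {y | V y ≠ ⊤} ∧ V x ≠ ⊤} = 0

/-- The functional inverse Santaló inequality with constant `c`, restricted to a class `P`. -/
def InvSantaloOn {n : ℕ} (c : ℝ) (P : (En n → EReal) → Prop) : Prop :=
  ∀ f : En n → EReal, IsF f → P f →
    0 < intExpNeg volume f → 0 < intExpNeg volume (legendre f) →
    ENNReal.ofReal c ^ n ≤ intExpNeg volume f * intExpNeg volume (legendre f)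

/-- The functional inverse Santaló inequality `IS_n(c)`. -/
def InvSantalo (n : ℕ) (c : ℝ) : Prop := InvSantaloOn (n := n) c fun _ => True

/-- The symmetric functional inverse Santaló inequality `IS_{n,s}(c)`. -/
def InvSantaloSymm (n : ℕ) (c : ℝ) : Prop := InvSantaloOn (n := n) c SymmFun

/-- The unconditional functional inverse Santaló inequality `IS_{n,u}(c)`. -/
def InvSantaloUncond (n : ℕ) (c : ℝ) : Prop := InvSantaloOn (n := n) c UncondFun

section AuxStatement12
open Metric

lemma expNeg_le_of_le {c : ℝ} {t : EReal} (h : (c : EReal) ≤ t) :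
    expNeg t ≤ ENNReal.ofReal (Real.exp (-c)) := by
  induction t using EReal.rec with
  | bot => simp at h
  | coe r =>
    simp only [expNeg, EReal.coe_ne_bot, if_false, EReal.coe_ne_top, EReal.toReal_coe]
    exact ENNReal.ofReal_le_ofReal (Real.exp_le_exp.2 (by
      have := EReal.coe_le_coe_iff.1 h; linarith))
  | top => simp [expNeg]

lemma le_expNeg_of_le {c : ℝ} {t : EReal} (h : t ≤ (c : EReal)) :
    ENNReal.ofReal (Real.exp (-c)) ≤ expNeg t := by
  induction t using EReal.rec with
  | bot => simp [expNeg]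
  | coe r =>
    simp only [expNeg, EReal.coe_ne_bot, if_false, EReal.coe_ne_top, EReal.toReal_coe]
    exact ENNReal.ofReal_le_ofReal (Real.exp_le_exp.2 (by
      have := EReal.coe_le_coe_iff.1 h; linarith))
  | top => simp at h


lemma summable_aux (d : ℕ) {q : ℝ} (h0 : 0 < q) (h1 : q < 1) :
    Summable (fun k : ℕ => ((k : ℝ) + 1) ^ d * q ^ k) := by
  have h : Summable (fun k : ℕ => (k : ℝ) ^ d * q ^ k) :=
    summable_pow_mul_geometric_of_norm_lt_one d (by rwa [Real.norm_eq_abs, abs_of_pos h0])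
  have h2 : Summable (fun k : ℕ => ((k + 1 : ℕ) : ℝ) ^ d * q ^ (k + 1)) :=
    (summable_nat_add_iff 1).2 h
  have h3 := h2.mul_left q⁻¹
  refine h3.congr fun k => ?_
  push_cast
  rw [pow_succ]
  field_simp

lemma lintegral_expNeg_linear_lt_top (n : ℕ) {a : ℝ} (b : ℝ) (ha : 0 < a) :
    ∫⁻ x : En n, ENNReal.ofReal (Real.exp (-(a * ‖x‖ + b))) < ⊤ := by
  set f : En n → ℝ≥0∞ := fun x => ENNReal.ofReal (Real.exp (-(a * ‖x‖ + b))) with hf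
  set A : ℕ → Set (En n) := fun k => closedBall 0 (k + 1) \ ball 0 k with hA
  have hcover : (univ : Set (En n)) ⊆ ⋃ k, A k := by
    intro x _
    refine mem_iUnion.2 ⟨⌊‖x‖⌋₊, ?_, ?_⟩
    · simp only [mem_closedBall, dist_zero_right]
      exact (Nat.lt_floor_add_one ‖x‖).le
    · simp only [mem_ball, dist_zero_right, not_lt]
      exact Nat.floor_le (norm_nonneg x)
  set V : ℝ≥0∞ := volume (ball (0 : En n) 1) with hV
  have hVtop : V ≠ ⊤ := measure_ball_lt_top.ne
  have key : ∀ k : ℕ, ∫⁻ x in A k, f x ≤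
      ENNReal.ofReal (((k : ℝ) + 1) ^ n * (Real.exp (-a)) ^ k * Real.exp (-b)) * V := by
    intro k
    have hbd : ∀ x ∈ A k, f x ≤ ENNReal.ofReal (Real.exp (-(a * k + b))) := by
      intro x hx
      refine ENNReal.ofReal_le_ofReal (Real.exp_le_exp.2 ?_)
      have hk : (k : ℝ) ≤ ‖x‖ := by
        have := hx.2; simp only [mem_ball, dist_zero_right, not_lt] at this; exact this
      nlinarith
    calc ∫⁻ x in A k, f x ≤ ∫⁻ _ in A k, ENNReal.ofReal (Real.exp (-(a * k + b))) := by
          refine setLIntegral_mono' (measurableSet_closedBall.diff measurableSet_ball) hbd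
      _ = ENNReal.ofReal (Real.exp (-(a * k + b))) * volume (A k) := by
          rw [setLIntegral_const]
      _ ≤ ENNReal.ofReal (Real.exp (-(a * k + b))) * volume (closedBall (0 : En n) (k + 1)) :=
          mul_le_mul_right (measure_mono diff_subset) _
      _ = ENNReal.ofReal (((k : ℝ) + 1) ^ n * (Real.exp (-a)) ^ k * Real.exp (-b)) * V := by
          rw [Measure.addHaar_closedBall _ _ (by positivity : (0:ℝ) ≤ (k : ℝ) + 1), hV,
            finrank_euclideanSpace_fin, ← mul_assoc, ← ENNReal.ofReal_mul (by positivity)]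
          have he : Real.exp (-(a * (k:ℝ) + b)) = (Real.exp (-a)) ^ k * Real.exp (-b) := by
            rw [← Real.exp_nat_mul, ← Real.exp_add]; congr 1; ring
          rw [he]; ring_nf
  have hsum : Summable (fun k : ℕ => ((k : ℝ) + 1) ^ n * (Real.exp (-a)) ^ k * Real.exp (-b)) :=
    ((summable_aux n (Real.exp_pos _) (Real.exp_lt_one_iff.2 (by linarith))).mul_right _)
  calc ∫⁻ x, f x = ∫⁻ x in univ, f x := (setLIntegral_univ f).symm
    _ ≤ ∫⁻ x in ⋃ k, A k, f x := lintegral_mono_set hcover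
    _ ≤ ∑' k, ∫⁻ x in A k, f x := lintegral_iUnion_le _ _
    _ ≤ ∑' k : ℕ, ENNReal.ofReal (((k : ℝ) + 1) ^ n * (Real.exp (-a)) ^ k * Real.exp (-b)) * V :=
        ENNReal.tsum_le_tsum key
    _ = (∑' k : ℕ, ENNReal.ofReal (((k : ℝ) + 1) ^ n * (Real.exp (-a)) ^ k * Real.exp (-b))) * V :=
        ENNReal.tsum_mul_right
    _ < ⊤ := by
        rw [← ENNReal.ofReal_tsum_of_nonneg (fun k => by positivity) hsum]
        exact ENNReal.mul_lt_top ENNReal.ofReal_lt_top hVtop.lt_top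


lemma bounded_of_convex_finite {n : ℕ} {A : Set (En n)} (hA : Convex ℝ A)
    {x₀ : En n} {r : ℝ} (hr : 0 < r) (hball : ball x₀ r ⊆ A)
    (hfin : volume A ≠ ⊤) : ∃ R : ℝ, A ⊆ closedBall x₀ R := by
  by_contra hc
  push_neg at hc
  set v : ℝ≥0∞ := volume (ball (0 : En n) (r / 2)) with hv
  have hv0 : v ≠ 0 := (measure_ball_pos _ _ (by linarith)).ne'
  have hvt : v ≠ ⊤ := measure_ball_lt_top.ne
  obtain ⟨N, hN⟩ := ENNReal.exists_nat_gt (ENNReal.div_lt_top hfin hv0).ne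
  obtain ⟨z, hzA, hz⟩ := Set.not_subset.1 (hc (4 * r * (N + 1)))
  rw [mem_closedBall, not_le, dist_eq_norm] at hz
  set d : ℝ := ‖z - x₀‖ with hd
  have hd0 : 0 < d := lt_trans (by positivity) hz
  set c : ℕ → En n := fun j => x₀ + ((2 * r * j / d) : ℝ) • (z - x₀) with hcdef
  have hsub : ∀ j : ℕ, j ≤ N → ball (c j) (r / 2) ⊆ A := by
    intro j hj y hy
    set t : ℝ := 2 * r * j / d with ht
    have ht0 : 0 ≤ t := by positivity
    have htlt : t < 1 / 2 := by
      rw [ht, div_lt_iff₀ hd0]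
      have hjN : (j : ℝ) ≤ N := Nat.cast_le.2 hj
      nlinarith [hz]
    have h1t : 0 < 1 - t := by linarith
    set w : En n := (1 - t)⁻¹ • (y - t • z) with hw
    have hyw : y = (1 - t) • w + t • z := by
      rw [hw, smul_smul, mul_inv_cancel₀ h1t.ne', one_smul]
      abel
    have hwmem : w ∈ ball x₀ r := by
      have hwx : w - x₀ = (1 - t)⁻¹ • (y - c j) := by
        rw [hw, hcdef]
        simp only [← ht]
        match_scalars <;> (field_simp; try ring)
      rw [mem_ball, dist_eq_norm, hwx, norm_smul]
      rw [mem_ball, dist_eq_norm] at hy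
      have : ‖(1 - t)⁻¹‖ = (1 - t)⁻¹ := by
        rw [Real.norm_eq_abs, abs_of_pos (by positivity)]
      rw [this]
      calc (1 - t)⁻¹ * ‖y - c j‖ < (1 - t)⁻¹ * (r / 2) := by
            exact mul_lt_mul_of_pos_left hy (by positivity)
        _ ≤ 2 * (r / 2) := by
            apply mul_le_mul_of_nonneg_right _ (by positivity)
            rw [inv_le_comm₀ h1t (by norm_num)]
            linarith
        _ = r := by ring
    rw [hyw]
    exact hA (hball hwmem) hzA (by linarith) ht0 (by ring)
  have hdisj : ∀ i j : ℕ, i ≠ j → Disjoint (ball (c i) (r / 2)) (ball (c j) (r / 2)) := by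
    intro i j hij
    apply ball_disjoint_ball
    rw [dist_eq_norm, hcdef]
    have : x₀ + ((2 * r * i / d) : ℝ) • (z - x₀) - (x₀ + ((2 * r * j / d) : ℝ) • (z - x₀))
        = ((2 * r * i / d - 2 * r * j / d) : ℝ) • (z - x₀) := by module
    rw [this, norm_smul, Real.norm_eq_abs, ← hd]
    have heq : 2 * r * i / d - 2 * r * j / d = 2 * r * ((i : ℝ) - j) / d := by ring
    rw [heq, abs_div, abs_of_pos hd0, abs_mul,
      abs_of_pos (by positivity : (0:ℝ) < 2 * r), div_mul_cancel₀ _ hd0.ne']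
    have h1 : (1 : ℝ) ≤ |(i : ℝ) - j| := by
      rcases lt_or_gt_of_ne hij with h | h
      · rw [abs_sub_comm, abs_of_pos (sub_pos.2 (Nat.cast_lt.2 h))]
        have : (i : ℝ) + 1 ≤ j := by exact_mod_cast h
        linarith
      · rw [abs_of_pos (sub_pos.2 (Nat.cast_lt.2 h))]
        have : (j : ℝ) + 1 ≤ i := by exact_mod_cast h
        linarith
    nlinarith
  have hcount : ((N : ℝ≥0∞) + 1) * v ≤ volume A := by
    have := measure_biUnion_finset (s := Finset.range (N + 1))
      (f := fun j => ball (c j) (r / 2)) (μ := volume)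
      (fun i hi j hj hij => hdisj i j hij) (fun j _ => measurableSet_ball)
    have hle : volume (⋃ j ∈ Finset.range (N + 1), ball (c j) (r / 2)) ≤ volume A := by
      apply measure_mono
      intro y hy
      simp only [Finset.mem_range, mem_iUnion] at hy
      obtain ⟨j, hj, hyj⟩ := hy
      exact hsub j (Nat.lt_succ_iff.1 hj) hyj
    rw [this] at hle
    calc ((N : ℝ≥0∞) + 1) * v = ∑ j ∈ Finset.range (N + 1), v := by
          rw [Finset.sum_const, Finset.card_range, nsmul_eq_mul]
          push_cast
          ring
      _ = ∑ j ∈ Finset.range (N + 1), volume (ball (c j) (r / 2)) := by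
          refine Finset.sum_congr rfl fun j _ => ?_
          exact (Measure.addHaar_ball_center volume (c j) (r / 2)).symm
      _ ≤ volume A := hle
  have : (N : ℝ≥0∞) + 1 ≤ volume A / v := by
    rw [ENNReal.le_div_iff_mul_le (Or.inl hv0) (Or.inl hvt)]
    exact hcount
  have : (N : ℝ≥0∞) < volume A / v := lt_of_lt_of_le (by
    exact ENNReal.lt_add_right (by simp) one_ne_zero) this
  exact absurd hN (not_lt.2 this.le)


-- (ii) ⇒ (iii)
lemma two_three {n : ℕ} {ψ : En n → EReal} {a b : ℝ} (ha : 0 < a)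
    (h : ∀ x, ((a * ‖x‖ + b : ℝ) : EReal) ≤ ψ x) :
    (0 : En n) ∈ interior {y | legendre ψ y ≠ ⊤} := by
  refine mem_interior.2 ⟨ball 0 a, fun y hy => ?_, isOpen_ball, mem_ball_self ha⟩
  have hb : legendre ψ y ≤ ((-b : ℝ) : EReal) := by
    refine iSup_le fun x => ?_
    have h1 : ((inner ℝ x y : ℝ) : EReal) - ψ x ≤
        ((inner ℝ x y : ℝ) : EReal) - ((a * ‖x‖ + b : ℝ) : EReal) :=
      EReal.sub_le_sub le_rfl (h x)
    refine h1.trans ?_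
    rw [← EReal.coe_sub]
    refine EReal.coe_le_coe_iff.2 ?_
    have hxy : (inner ℝ x y : ℝ) ≤ a * ‖x‖ := by
      calc (inner ℝ x y : ℝ) ≤ ‖x‖ * ‖y‖ := real_inner_le_norm x y
        _ ≤ ‖x‖ * a := by
            apply mul_le_mul_of_nonneg_left _ (norm_nonneg x)
            rw [mem_ball, dist_zero_right] at hy
            exact hy.le
        _ = a * ‖x‖ := mul_comm _ _
    linarith
  simp only [mem_setOf_eq]
  exact fun htop => absurd (htop ▸ hb) (by simp)

-- key consequence of a point in dom of legendre
lemma key_dom {n : ℕ} {ψ : En n → EReal} (hbot : ∀ x, ψ x ≠ ⊥) {y : En n}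
    (hy : legendre ψ y ≠ ⊤) (x : En n) :
    (((inner ℝ x y : ℝ) - (legendre ψ y).toReal : ℝ) : EReal) ≤ ψ x := by
  have h1 : ((inner ℝ x y : ℝ) : EReal) - ψ x ≤ legendre ψ y := by
    unfold legendre; exact le_iSup (fun x : En n => ((inner ℝ x y : ℝ) : EReal) - ψ x) x
  rcases eq_or_ne (ψ x) ⊤ with hx | hx
  · rw [hx]; exact le_top
  have hxr : ψ x = ((ψ x).toReal : ℝ) := (EReal.coe_toReal hx (hbot x)).symm
  rcases eq_or_ne (legendre ψ y) ⊥ with hl | hl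
  · exfalso
    rw [hxr, ← EReal.coe_sub, hl] at h1
    exact (EReal.coe_ne_bot _) (le_bot_iff.1 h1)
  have hlr : legendre ψ y = (((legendre ψ y).toReal : ℝ) : EReal) :=
    (EReal.coe_toReal hy hl).symm
  rw [hxr, ← EReal.coe_sub, hlr] at h1
  rw [hxr]
  exact EReal.coe_le_coe_iff.2 (by
    have := EReal.coe_le_coe_iff.1 h1; linarith)

-- (iii) ⇒ (ii)
lemma three_two {n : ℕ} {ψ : En n → EReal} (hbot : ∀ x, ψ x ≠ ⊥)
    (h : (0 : En n) ∈ interior {y | legendre ψ y ≠ ⊤}) :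
    ∃ a b : ℝ, 0 < a ∧ ∀ x, ((a * ‖x‖ + b : ℝ) : EReal) ≤ ψ x := by
  obtain ⟨ε, hε, hball⟩ := Metric.isOpen_iff.1 isOpen_interior 0 h
  have hdom : ∀ y : En n, ‖y‖ < ε → legendre ψ y ≠ ⊤ := by
    intro y hy
    exact interior_subset (hball (by rwa [mem_ball, dist_zero_right]))
  rcases Nat.eq_zero_or_pos n with hn | hn
  · subst hn
    refine ⟨1, -(legendre ψ 0).toReal, one_pos, fun x => ?_⟩
    have hx0 : ‖x‖ = 0 := by
      rw [EuclideanSpace.norm_eq]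
      simp
    have := key_dom hbot (hdom 0 (by simpa using hε)) x
    rw [inner_zero_right] at this
    simpa [hx0] using this
  · set δ : ℝ := ε / 2 with hδ
    have hδ0 : 0 < δ := by positivity
    have hsd : ∀ (i : Fin n) (c : ℝ), |c| = δ →
        legendre ψ (EuclideanSpace.single i c) ≠ ⊤ := by
      intro i c hc
      apply hdom
      rw [EuclideanSpace.norm_single, Real.norm_eq_abs, hc]
      linarith
    set g : Fin n → ℝ := fun i =>
      max (legendre ψ (EuclideanSpace.single i δ)).toReal
        (legendre ψ (EuclideanSpace.single i (-δ))).toReal with hg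
    have hne : (Finset.univ : Finset (Fin n)).Nonempty := by
      have : Nonempty (Fin n) := Fin.pos_iff_nonempty.1 hn
      exact Finset.univ_nonempty
    set M : ℝ := Finset.univ.sup' hne g with hM
    refine ⟨δ / Real.sqrt n, -M, by positivity, fun x => ?_⟩
    -- choose coordinate with max abs value
    obtain ⟨i, -, hi⟩ := Finset.exists_max_image Finset.univ (fun i => |x i|) hne
    have hnorm : ‖x‖ ≤ Real.sqrt n * |x i| := by
      rw [EuclideanSpace.norm_eq]
      rw [show Real.sqrt n * |x i| = Real.sqrt (n * |x i| ^ 2) by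
        rw [Real.sqrt_mul (Nat.cast_nonneg n), Real.sqrt_sq_eq_abs, abs_abs]]
      apply Real.sqrt_le_sqrt
      calc ∑ j, ‖x j‖ ^ 2 ≤ ∑ _j : Fin n, |x i| ^ 2 := by
            refine Finset.sum_le_sum fun j _ => ?_
            rw [Real.norm_eq_abs]
            exact pow_le_pow_left₀ (abs_nonneg _) (hi j (Finset.mem_univ j)) 2
        _ = n * |x i| ^ 2 := by rw [Finset.sum_const, Finset.card_univ, Fintype.card_fin,
            nsmul_eq_mul]
    have hMg : g i ≤ M := Finset.le_sup' g (Finset.mem_univ i)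
    -- ψ x ≥ δ * |x i| - M
    have hkey : ((δ * |x i| - M : ℝ) : EReal) ≤ ψ x := by
      rcases le_or_gt 0 (x i) with hxi | hxi
      · have := key_dom hbot (hsd i δ (abs_of_pos hδ0)) x
        rw [EuclideanSpace.inner_single_right] at this
        refine le_trans (EReal.coe_le_coe_iff.2 ?_) this
        rw [abs_of_nonneg hxi]
        have h1 : (legendre ψ (EuclideanSpace.single i δ)).toReal ≤ M :=
          le_trans (le_max_left _ _) hMg
        simp only [conj_trivial]
        nlinarith
      · have := key_dom hbot (hsd i (-δ) (by rw [abs_neg]; exact abs_of_pos hδ0)) x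
        rw [EuclideanSpace.inner_single_right] at this
        refine le_trans (EReal.coe_le_coe_iff.2 ?_) this
        rw [abs_of_neg hxi]
        have h1 : (legendre ψ (EuclideanSpace.single i (-δ))).toReal ≤ M :=
          le_trans (le_max_right _ _) hMg
        simp only [conj_trivial]
        nlinarith
    refine le_trans (EReal.coe_le_coe_iff.2 ?_) hkey
    have hsn : 0 < Real.sqrt n := Real.sqrt_pos.2 (by exact_mod_cast hn)
    have h2 : δ / Real.sqrt n * ‖x‖ ≤ δ * |x i| := by
      rw [div_mul_eq_mul_div, div_le_iff₀ hsn]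
      nlinarith [norm_nonneg x]
    linarith


lemma le_expNeg_of_le' {c : ℝ} {t : EReal} (h : t ≤ (c : EReal)) :
    ENNReal.ofReal (Real.exp (-c)) ≤ expNeg t := by
  induction t using EReal.rec with
  | bot => simp [expNeg]
  | coe r =>
    simp only [expNeg, EReal.coe_ne_bot, if_false, EReal.coe_ne_top, EReal.toReal_coe]
    exact ENNReal.ofReal_le_ofReal (Real.exp_le_exp.2 (by
      have := EReal.coe_le_coe_iff.1 h; linarith))
  | top => simp at h

lemma sublevel_convex {n : ℕ} {ψ : En n → EReal} (hconv : ConvexE ψ) (c : ℝ) :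
    Convex ℝ {x | ψ x ≤ (c : EReal)} := by
  intro x hx y hy s u hs hu hsu
  have h1 : ψ (s • x + (1 - s) • y) ≤ (s : EReal) * ψ x + ((1 - s : ℝ) : EReal) * ψ y :=
    hconv x y s hs (by linarith)
  have hu' : u = 1 - s := by linarith
  rw [hu']
  refine le_trans h1 ?_
  calc (s : EReal) * ψ x + ((1 - s : ℝ) : EReal) * ψ y
      ≤ (s : EReal) * (c : EReal) + ((1 - s : ℝ) : EReal) * (c : EReal) := by
        refine add_le_add ?_ ?_
        · exact mul_le_mul_of_nonneg_left hx (by exact_mod_cast hs)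
        · exact mul_le_mul_of_nonneg_left hy (by exact_mod_cast (by linarith : (0:ℝ) ≤ 1 - s))
    _ = (c : EReal) := by
        rw [← EReal.coe_mul, ← EReal.coe_mul, ← EReal.coe_add]
        norm_cast
        ring

lemma exists_sublevel_pos {n : ℕ} {ψ : En n → EReal}
    (hpos : 0 < intExpNeg volume ψ) :
    ∃ c : ℕ, 0 < volume {x : En n | ψ x ≤ ((c : ℝ) : EReal)} := by
  by_contra hc
  push_neg at hc
  simp only [le_zero_iff] at hc
  have hnull : volume (⋃ c : ℕ, {x : En n | ψ x ≤ ((c : ℝ) : EReal)}) = 0 :=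
    measure_iUnion_null fun c => hc c
  have hae : ∀ᵐ x : En n, ψ x = ⊤ := by
    rw [ae_iff]
    refine measure_mono_null ?_ hnull
    intro x hx
    simp only [mem_setOf_eq] at hx
    have h1 : ψ x ≤ ((ψ x).toReal : EReal) := EReal.le_coe_toReal hx
    refine mem_iUnion.2 ⟨⌈(ψ x).toReal⌉₊, ?_⟩
    exact h1.trans (EReal.coe_le_coe_iff.2 (Nat.le_ceil _))
  have : intExpNeg volume ψ = 0 := by
    rw [intExpNeg, ← lintegral_zero]
    refine lintegral_congr_ae ?_
    filter_upwards [hae] with x hx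
    simp [expNeg, hx]
  rw [this] at hpos
  exact lt_irrefl _ hpos

lemma lsc_bounded_below_on_compact {n : ℕ} {ψ : En n → EReal}
    (hlsc : LowerSemicontinuous ψ) (hbot : ∀ x, ψ x ≠ ⊥) {K : Set (En n)}
    (hK : IsCompact K) : ∃ m : ℝ, ∀ x ∈ K, ((m : ℝ) : EReal) < ψ x := by
  have hopen : ∀ k : ℕ, IsOpen {x : En n | ((-(k : ℝ) : ℝ) : EReal) < ψ x} :=
    fun k => hlsc.isOpen_preimage _
  have hcov : K ⊆ ⋃ k : ℕ, {x : En n | ((-(k : ℝ) : ℝ) : EReal) < ψ x} := by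
    intro x _
    rcases eq_or_ne (ψ x) ⊤ with hx | hx
    · exact mem_iUnion.2 ⟨0, by simp [hx]⟩
    · have h1 : (((ψ x).toReal : ℝ) : EReal) ≤ ψ x := EReal.coe_toReal_le (hbot x)
      refine mem_iUnion.2 ⟨⌈-(ψ x).toReal⌉₊ + 1, ?_⟩
      simp only [mem_setOf_eq]
      refine lt_of_lt_of_le ?_ h1
      refine EReal.coe_lt_coe_iff.2 ?_
      have := Nat.le_ceil (-(ψ x).toReal)
      push_cast
      linarith
  obtain ⟨F, hF⟩ := hK.elim_finite_subcover _ hopen hcov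
  rcases F.eq_empty_or_nonempty with hFe | hFne
  · refine ⟨0, fun x hx => ?_⟩
    rw [hFe] at hF
    simp at hF
    rw [hF] at hx
    exact absurd hx (notMem_empty x)
  · set K₀ : ℕ := F.max' hFne with hK₀
    refine ⟨-(K₀ : ℝ), fun x hx => ?_⟩
    obtain ⟨k, hkF, hk⟩ := by
      have := hF hx
      simp only [Finset.mem_coe, mem_iUnion, exists_prop] at this
      exact this
    refine lt_of_le_of_lt ?_ hk
    refine EReal.coe_le_coe_iff.2 ?_
    simp only [neg_le_neg_iff, Nat.cast_le]
    exact F.le_max' k hkF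


lemma one_two {n : ℕ} {ψ : En n → EReal} (hlsc : LowerSemicontinuous ψ)
    (hconv : ConvexE ψ) (hbot : ∀ x, ψ x ≠ ⊥) (hpos : 0 < intExpNeg volume ψ)
    (hfin : intExpNeg volume ψ < ⊤) :
    ∃ a b : ℝ, 0 < a ∧ ∀ x, ((a * ‖x‖ + b : ℝ) : EReal) ≤ ψ x := by
  obtain ⟨c₀, hc₀⟩ := exists_sublevel_pos hpos
  set S : Set (En n) := {x | ψ x ≤ ((c₀ : ℝ) : EReal)} with hS
  set A : Set (En n) := {x | ψ x ≤ (((c₀ : ℝ) + 1 : ℝ) : EReal)} with hAdef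
  have hSA : S ⊆ A := fun x hx => le_trans hx (EReal.coe_le_coe_iff.2 (by linarith))
  have hAmeas : MeasurableSet A := (hlsc.isClosed_preimage _).measurableSet
  -- interior of S nonempty
  have hint : (interior S).Nonempty := by
    by_contra hc
    rw [not_nonempty_iff_eq_empty] at hc
    have hfr : volume (frontier S) = 0 :=
      (sublevel_convex hconv (c₀ : ℝ)).addHaar_frontier volume
    have : volume S = 0 := by
      refine measure_mono_null ?_ hfr
      rw [frontier, hc, diff_empty]
      exact subset_closure
    exact absurd this hc₀.ne'
  obtain ⟨x₁, hx₁⟩ := hint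
  obtain ⟨r, hr, hball⟩ := Metric.isOpen_iff.1 isOpen_interior x₁ hx₁
  have hballS : ball x₁ r ⊆ S := hball.trans interior_subset
  have hx₁S : x₁ ∈ S := interior_subset hx₁
  -- A has finite measure
  have hAfin : volume A ≠ ⊤ := by
    have h1 : ENNReal.ofReal (Real.exp (-((c₀ : ℝ) + 1))) * volume A ≤
        intExpNeg volume ψ := by
      calc ENNReal.ofReal (Real.exp (-((c₀ : ℝ) + 1))) * volume A
          = ∫⁻ _ in A, ENNReal.ofReal (Real.exp (-((c₀ : ℝ) + 1))) ∂volume := by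
            rw [setLIntegral_const]
        _ ≤ ∫⁻ x in A, expNeg (ψ x) ∂volume :=
            setLIntegral_mono' hAmeas fun x hx => le_expNeg_of_le hx
        _ ≤ ∫⁻ x, expNeg (ψ x) ∂volume := setLIntegral_le_lintegral _ _
    intro htop
    rw [htop, ENNReal.mul_top (by positivity : ENNReal.ofReal (Real.exp (-((c₀:ℝ)+1))) ≠ 0)]
      at h1
    exact absurd (lt_of_le_of_lt h1 hfin) (lt_irrefl _)
  -- A bounded
  obtain ⟨R, hR⟩ := bounded_of_convex_finite (sublevel_convex hconv _) hr
    (hballS.trans hSA) hAfin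
  have hR0 : 0 ≤ R := by
    have := hR (hSA hx₁S)
    rwa [mem_closedBall, dist_self] at this
  set s : ℝ := R + 1 with hs
  have hs0 : 0 < s := by linarith
  -- far bound
  have hfar : ∀ x : En n, s ≤ ‖x - x₁‖ →
      (((1 / s) * ‖x - x₁‖ + (c₀ : ℝ) : ℝ) : EReal) ≤ ψ x := by
    intro x hxd
    set d : ℝ := ‖x - x₁‖ with hd
    have hd0 : 0 < d := lt_of_lt_of_le hs0 hxd
    set t : ℝ := s / d with ht
    have ht0 : 0 ≤ t := by positivity
    have ht1 : t ≤ 1 := by rw [ht, div_le_one hd0]; exact hxd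
    set z : En n := t • x + (1 - t) • x₁ with hz
    have hznA : z ∉ A := by
      intro hzA
      have := hR hzA
      rw [mem_closedBall, dist_eq_norm] at this
      have hzx : z - x₁ = t • (x - x₁) := by rw [hz]; module
      rw [hzx, norm_smul, Real.norm_eq_abs, abs_of_pos (by positivity), ← hd] at this
      rw [ht, div_mul_cancel₀ _ hd0.ne'] at this
      linarith
    have hzgt : (((c₀ : ℝ) + 1 : ℝ) : EReal) < ψ z := not_le.1 hznA
    have hcv := hconv x x₁ t ht0 ht1
    rcases eq_or_ne (ψ x) ⊤ with hxt | hxt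
    · rw [hxt]; exact le_top
    have hxr : ψ x = (((ψ x).toReal : ℝ) : EReal) := (EReal.coe_toReal hxt (hbot x)).symm
    set rr : ℝ := (ψ x).toReal with hrr
    have hstep : (((c₀ : ℝ) + 1 : ℝ) : EReal) < ((t * rr + (1 - t) * c₀ : ℝ) : EReal) := by
      refine lt_of_lt_of_le hzgt (le_trans hcv ?_)
      have h2 : ((1 - t : ℝ) : EReal) * ψ x₁ ≤ ((1 - t : ℝ) : EReal) * ((c₀ : ℝ) : EReal) :=
        mul_le_mul_of_nonneg_left hx₁S (by exact_mod_cast (by linarith : (0:ℝ) ≤ 1 - t))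
      have h3 : (t : EReal) * ψ x = (t : EReal) * (rr : EReal) := by rw [← hxr]
      calc (t : EReal) * ψ x + ((1 - t : ℝ) : EReal) * ψ x₁
          ≤ (t : EReal) * (rr : EReal) + ((1 - t : ℝ) : EReal) * ((c₀ : ℝ) : EReal) := by
            rw [h3]; exact add_le_add le_rfl h2
        _ = ((t * rr + (1 - t) * c₀ : ℝ) : EReal) := by
            rw [← EReal.coe_mul, ← EReal.coe_mul, ← EReal.coe_add]
    have hreal : (c₀ : ℝ) + 1 < t * rr + (1 - t) * c₀ := EReal.coe_lt_coe_iff.1 hstep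
    rw [hxr]
    refine EReal.coe_le_coe_iff.2 ?_
    have ht' : t * d = s := by rw [ht]; field_simp
    have : t * (rr - c₀) > 1 := by nlinarith
    -- t = s/d, so rr - c₀ > d/s
    have hfin2 : rr - (c₀ : ℝ) > d / s := by
      rw [gt_iff_lt, div_lt_iff₀ hs0]
      nlinarith
    rw [div_mul_eq_mul_div, one_mul]
    rw [gt_iff_lt, lt_sub_iff_add_lt] at hfin2
    have : d / s = d * (1/s) := by ring
    nlinarith
  -- near bound
  obtain ⟨m, hm⟩ := lsc_bounded_below_on_compact hlsc hbot
    (isCompact_closedBall x₁ s)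
  refine ⟨1 / s, min ((c₀ : ℝ) - ‖x₁‖ / s) (m - (‖x₁‖ + s) / s), by positivity, fun x => ?_⟩
  rcases le_or_gt ‖x - x₁‖ s with hc | hc
  · have hxK : x ∈ closedBall x₁ s := by rwa [mem_closedBall, dist_eq_norm]
    refine le_of_lt (lt_of_le_of_lt ?_ (hm x hxK))
    refine EReal.coe_le_coe_iff.2 ?_
    have hxle : ‖x‖ ≤ ‖x₁‖ + s := by
      have := norm_add_le (x - x₁) x₁
      simp only [sub_add_cancel] at this
      linarith
    have h1 : (1 / s) * ‖x‖ ≤ (‖x₁‖ + s) / s := by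
      have h0 : (‖x₁‖ + s) / s = (1 / s) * (‖x₁‖ + s) := by ring
      rw [h0]
      exact mul_le_mul_of_nonneg_left hxle (by positivity)
    have h2 : min ((c₀ : ℝ) - ‖x₁‖ / s) (m - (‖x₁‖ + s) / s) ≤ m - (‖x₁‖ + s) / s :=
      min_le_right _ _
    linarith
  · refine le_trans (EReal.coe_le_coe_iff.2 ?_) (hfar x hc.le)
    have hxle : ‖x‖ ≤ ‖x - x₁‖ + ‖x₁‖ := by
      have := norm_add_le (x - x₁) x₁
      simpa only [sub_add_cancel] using this
    have h1 : (1 / s) * ‖x‖ ≤ (1 / s) * ‖x - x₁‖ + ‖x₁‖ / s := by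
      have := mul_le_mul_of_nonneg_left hxle (by positivity : (0:ℝ) ≤ 1 / s)
      calc (1/s) * ‖x‖ ≤ (1/s) * (‖x - x₁‖ + ‖x₁‖) := this
        _ = (1 / s) * ‖x - x₁‖ + ‖x₁‖ / s := by ring
    have h2 : min ((c₀ : ℝ) - ‖x₁‖ / s) (m - (‖x₁‖ + s) / s) ≤ (c₀ : ℝ) - ‖x₁‖ / s :=
      min_le_left _ _
    linarith


lemma two_one {n : ℕ} {ψ : En n → EReal} {a b : ℝ} (ha : 0 < a)
    (h : ∀ x, ((a * ‖x‖ + b : ℝ) : EReal) ≤ ψ x) :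
    intExpNeg volume ψ < ⊤ :=
  lt_of_le_of_lt (lintegral_mono fun x => expNeg_le_of_le (h x))
    (lintegral_expNeg_linear_lt_top n b ha)

end AuxStatement12

/-- For a lower semicontinuous convex `ψ : ℝⁿ → ℝ ∪ {+∞}` with
`∫ e^{-ψ} dx > 0`, the following are equivalent: (i) `∫ e^{-ψ} dx < ∞`;
(ii) `ψ(x) ≥ a|x| + b` for some `a > 0`, `b ∈ ℝ`; (iii) `0 ∈ int(dom ψ*)`. -/
theorem statement12 (n : ℕ) (ψ : En n → EReal) (hlsc : LowerSemicontinuous ψ)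
    (hconv : ConvexE ψ) (hbot : ∀ x, ψ x ≠ ⊥)
    (hpos : 0 < intExpNeg volume ψ) :
    (intExpNeg volume ψ < ⊤ ↔
      ∃ a b : ℝ, 0 < a ∧ ∀ x, ((a * ‖x‖ + b : ℝ) : EReal) ≤ ψ x) ∧
    (intExpNeg volume ψ < ⊤ ↔
      (0 : En n) ∈ interior {y | legendre ψ y ≠ ⊤}) := by
  constructor
  · constructor
    · intro hfin
      exact one_two hlsc hconv hbot hpos hfin
    · rintro ⟨a, b, ha, h⟩
      exact two_one ha h
  · constructor
    · intro hfin
      obtain ⟨a, b, ha, h⟩ := one_two hlsc hconv hbot hpos hfin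
      exact two_three ha h
    · intro h3
      obtain ⟨a, b, ha, h⟩ := three_two hbot h3
      exact two_one ha h

end
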